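/- Let (x^k) be a sequence in ℝⁿ with F(x⁰) < ∞, suppose F is bounded below on ℝⁿ, and suppose there are constants c₀, c, ᾱ > 0 and ρ ∈ (0,1] such that for all k, F(x^{k+1}) ≤ F(x^k) − c₀ · α_k² · ‖𝒢(x^k)‖², where α_k = min{ᾱ, c‖𝒢(x^k)‖^ρ}. Then ‖𝒢(x^k)‖ → 0 as k → ∞. -/
import Mathlib


open scoped RealInnerProductSpace
open Metric Set Filter

noncomputable section

abbrev En (n : ℕ) : Type := EuclideanSpace ℝ (Fin n)

/-- Convex subdifferential of an extended-real-valued function `g` at `x`. -/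
def ESubdiff {n : ℕ} (g : En n → EReal) (x : En n) : Set (En n) :=
  {v | ∀ y, g x + ((⟪v, y - x⟫ : ℝ) : EReal) ≤ g y}

/-- `g` is proper: it never takes the value `-∞` and is finite somewhere. -/
def ProperFun {n : ℕ} (g : En n → EReal) : Prop :=
  (∀ x, g x ≠ ⊥) ∧ ∃ x, g x ≠ ⊤

/-- Convexity for extended-real-valued functions. -/
def EConvexOn {n : ℕ} (g : En n → EReal) : Prop :=
  ∀ x y : En n, ∀ a b : ℝ, 0 ≤ a → 0 ≤ b → a + b = 1 →
    g (a • x + b • y) ≤ (a : EReal) * g x + (b : EReal) * g y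

/-- `p` minimizes `y ↦ g y + ‖y - u‖ ^ 2 / 2`. -/
def IsProxPt {n : ℕ} (g : En n → EReal) (u p : En n) : Prop :=
  ∀ y, g p + ((‖p - u‖ ^ 2 / 2 : ℝ) : EReal) ≤ g y + ((‖y - u‖ ^ 2 / 2 : ℝ) : EReal)

/-- `prox` maps each `u` to the unique minimizer of `y ↦ g y + ‖y - u‖ ^ 2 / 2`. -/
def IsProxMap {n : ℕ} (g : En n → EReal) (prox : En n → En n) : Prop :=
  ∀ u, IsProxPt g u (prox u) ∧ ∀ p, IsProxPt g u p → p = prox u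

/-- The solution set `𝒳* = argmin (f + g)`. -/
def ArgminSet {n : ℕ} (f : En n → ℝ) (g : En n → EReal) : Set (En n) :=
  {x | ∀ y, (f x : EReal) + g x ≤ (f y : EReal) + g y}

/-- The prox-gradient mapping `𝒢 x = x - Prox_g (x - ∇f x)`. -/
def Gmap {n : ℕ} (f' prox : En n → En n) (x : En n) : En n :=
  x - prox (x - f' x)

/-- If `F(x⁰) < ∞`, `F` is bounded below, and
`F(x^{k+1}) ≤ F(x^k) - c₀ α_k² ‖𝒢(x^k)‖²` with `α_k = min{ᾱ, c ‖𝒢(x^k)‖^ρ}`, then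
`‖𝒢(x^k)‖ → 0`. -/
theorem Gmap_tendsto_zero {n : ℕ}
    (f : En n → ℝ) (f' : En n → En n) (g : En n → EReal) (prox : En n → En n)
    (hfconv : ConvexOn ℝ Set.univ f)
    (hgrad : ∀ x, HasGradientAt f (f' x) x)
    (hgradcont : Continuous f')
    (hgproper : ProperFun g) (hglsc : LowerSemicontinuous g) (hgconv : EConvexOn g)
    (hprox : IsProxMap g prox)
    (x : ℕ → En n)
    (hF0 : (f (x 0) : EReal) + g (x 0) ≠ ⊤)
    (hbd : ∃ m : ℝ, ∀ z : En n, (m : EReal) ≤ (f z : EReal) + g z)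
    (c₀ c ᾱ : ℝ) (hc₀ : 0 < c₀) (hc : 0 < c) (hᾱ : 0 < ᾱ)
    (ρ : ℝ) (hρ0 : 0 < ρ) (hρ1 : ρ ≤ 1)
    (hdec : ∀ k : ℕ, (f (x (k + 1)) : EReal) + g (x (k + 1)) ≤
      ((f (x k) : EReal) + g (x k)) -
        ((c₀ * (min ᾱ (c * ‖Gmap f' prox (x k)‖ ^ ρ)) ^ 2 *
          ‖Gmap f' prox (x k)‖ ^ 2 : ℝ) : EReal)) :
    Tendsto (fun k => ‖Gmap f' prox (x k)‖) atTop (nhds 0) := by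
  classical
  obtain ⟨m, hm⟩ := hbd
  set t : ℕ → ℝ := fun k => ‖Gmap f' prox (x k)‖ with ht
  set d : ℕ → ℝ := fun k => c₀ * (min ᾱ (c * t k ^ ρ)) ^ 2 * t k ^ 2 with hdDef
  have ht0 : ∀ k, 0 ≤ t k := fun k => norm_nonneg _
  have hd0 : ∀ k, 0 ≤ d k := by
    intro k
    have : (0:ℝ) ≤ (min ᾱ (c * t k ^ ρ)) ^ 2 := sq_nonneg _
    positivity
  set F : ℕ → EReal := fun k => (f (x k) : EReal) + g (x k) with hFdef
  have hbot : ∀ k, F k ≠ ⊥ := by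
    intro k h
    have h2 := hm (x k)
    change (m : EReal) ≤ F k at h2
    rw [h] at h2
    exact absurd h2 (by simp)
  have htop : ∀ k, F k ≠ ⊤ := by
    intro k
    induction k with
    | zero => exact hF0
    | succ k ih =>
      have h := hdec k
      have hco : F k = ((F k).toReal : EReal) := (EReal.coe_toReal ih (hbot k)).symm
      refine ne_top_of_le_ne_top ?_ h
      change F k - ((c₀ * (min ᾱ (c * t k ^ ρ)) ^ 2 * t k ^ 2 : ℝ) : EReal) ≠ ⊤
      rw [hco, ← EReal.coe_sub]
      exact EReal.coe_ne_top _
  set G : ℕ → ℝ := fun k => (F k).toReal with hGdef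
  have hcoe : ∀ k, (G k : EReal) = F k := fun k => EReal.coe_toReal (htop k) (hbot k)
  have hdecR : ∀ k, G (k + 1) ≤ G k - d k := by
    intro k
    have h := hdec k
    change F (k + 1) ≤ F k - ((d k : ℝ) : EReal) at h
    rw [← hcoe, ← hcoe, ← EReal.coe_sub] at h
    exact_mod_cast h
  have hmG : ∀ k, m ≤ G k := by
    intro k
    have h2 := hm (x k)
    change (m : EReal) ≤ F k at h2
    rw [← hcoe k] at h2
    exact_mod_cast h2
  have hsum : ∀ N, ∑ i ∈ Finset.range N, d i ≤ G 0 - G N := by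
    intro N
    induction N with
    | zero => simp
    | succ N ih =>
      rw [Finset.sum_range_succ]
      have := hdecR N
      linarith
  have hsummable : Summable d :=
    summable_of_sum_range_le hd0 (fun N => (hsum N).trans (sub_le_sub_left (hmG N) (G 0)))
  have hdt : Tendsto d atTop (nhds 0) := hsummable.tendsto_atTop_zero
  rw [Metric.tendsto_atTop]
  intro ε hε
  set δ : ℝ := c₀ * (min ᾱ (c * ε ^ ρ)) ^ 2 * ε ^ 2 with hδ
  have hminpos : 0 < min ᾱ (c * ε ^ ρ) := lt_min hᾱ (mul_pos hc (Real.rpow_pos_of_pos hε ρ))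
  have hδpos : 0 < δ := by positivity
  obtain ⟨N, hN⟩ := (Metric.tendsto_atTop.mp hdt) δ hδpos
  refine ⟨N, fun k hk => ?_⟩
  have hdk : d k < δ := by
    have := hN k hk
    rw [Real.dist_eq] at this
    calc d k ≤ |d k - 0| := by rw [sub_zero]; exact le_abs_self _
    _ < δ := this
  rw [Real.dist_eq, sub_zero, abs_of_nonneg (ht0 k)]
  by_contra hcon
  push_neg at hcon
  have h1 : min ᾱ (c * ε ^ ρ) ≤ min ᾱ (c * t k ^ ρ) := by
    apply min_le_min le_rfl
    exact mul_le_mul_of_nonneg_left (Real.rpow_le_rpow hε.le hcon hρ0.le) hc.le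
  have h2 : (min ᾱ (c * ε ^ ρ)) ^ 2 ≤ (min ᾱ (c * t k ^ ρ)) ^ 2 :=
    pow_le_pow_left₀ hminpos.le h1 2
  have h3 : ε ^ 2 ≤ t k ^ 2 := pow_le_pow_left₀ hε.le hcon 2
  have : δ ≤ d k := by
    apply mul_le_mul (mul_le_mul_of_nonneg_left h2 hc₀.le) h3 (sq_nonneg _)
    positivity
  linarith
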